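/- Let g : Δ = [a,b]×[c,d] ⊂ [0,∞)² → [0,∞) be s-convex in the second sense on the co-ordinates for some s ∈ (0,1], with a < b, c < d, and g integrable on Δ. Then (1/((b-a)(d-c))) ∫_a^b ∫_c^d g(x,y) dy dx ≤ (g(a,c)+g(b,c)+g(a,d)+g(b,d))/(s+1)². -/

import Mathlib

open MeasureTheory Set intervalIntegral

-- continuity of x ↦ ((x - p)/k)^s and variants
lemma cont_rpow_aff (s : ℝ) (hs : 0 < s) (f : ℝ → ℝ) (hf : Continuous f) :
    Continuous fun x => (f x) ^ s := by
  rw [continuous_iff_continuousAt]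
  intro x
  exact (Real.continuousAt_rpow_const _ _ (Or.inr hs.le)).comp hf.continuousAt

lemma aux1 (s r : ℝ) (hs : 0 < s) (hr : 0 < r) :
    ∫ u in (0:ℝ)..r, (u / r) ^ s = r / (s + 1) := by
  have hrs : (0:ℝ) < r ^ s := Real.rpow_pos_of_pos hr s
  have h1 : ∫ u in (0:ℝ)..r, (u / r) ^ s = ∫ u in (0:ℝ)..r, u ^ s / r ^ s := by
    apply intervalIntegral.integral_congr
    intro u hu
    rw [Set.uIcc_of_le hr.le] at hu
    exact Real.div_rpow hu.1 hr.le s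
  rw [h1, intervalIntegral.integral_div, integral_rpow (Or.inl (by linarith)),
    Real.zero_rpow (by positivity), Real.rpow_add hr, Real.rpow_one]
  field_simp
  ring

lemma aux2 (s p q A B : ℝ) (hs : 0 < s) (hpq : p < q) (h : ℝ → ℝ)
    (hA : 0 ≤ A) (hB : 0 ≤ B)
    (hb : ∀ y ∈ Set.Icc p q, h y ≤ ((q - y)/(q - p)) ^ s * A + ((y - p)/(q - p)) ^ s * B)
    (hint : IntervalIntegrable h volume p q) :
    ∫ y in p..q, h y ≤ (q - p) / (s + 1) * (A + B) := by
  have hk : (0:ℝ) < q - p := by linarith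
  have hcont : Continuous fun y => ((q - y)/(q - p)) ^ s * A + ((y - p)/(q - p)) ^ s * B := by
    exact ((cont_rpow_aff s hs _ (by continuity)).mul continuous_const).add
      ((cont_rpow_aff s hs _ (by continuity)).mul continuous_const)
  have h2 : ∫ y in p..q, h y ≤
      ∫ y in p..q, (((q - y)/(q - p)) ^ s * A + ((y - p)/(q - p)) ^ s * B) :=
    intervalIntegral.integral_mono_on hpq.le hint (hcont.intervalIntegrable p q) hb
  have e1 : ∫ y in p..q, ((y - p)/(q - p)) ^ s = (q - p) / (s + 1) := by
    have := intervalIntegral.integral_comp_sub_right (fun u => (u / (q - p)) ^ s) p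
      (a := p) (b := q)
    rw [this, sub_self, aux1 s (q - p) hs hk]
  have e2 : ∫ y in p..q, ((q - y)/(q - p)) ^ s = (q - p) / (s + 1) := by
    have := intervalIntegral.integral_comp_sub_left (fun u => (u / (q - p)) ^ s) q
      (a := p) (b := q)
    rw [this, sub_self, aux1 s (q - p) hs hk]
  calc ∫ y in p..q, h y ≤ _ := h2
    _ = (∫ y in p..q, ((q - y)/(q - p)) ^ s) * A + (∫ y in p..q, ((y - p)/(q - p)) ^ s) * B := by
        rw [intervalIntegral.integral_add, intervalIntegral.integral_mul_const,
          intervalIntegral.integral_mul_const]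
        · exact ((cont_rpow_aff s hs _ (by continuity)).mul continuous_const).intervalIntegrable p q
        · exact ((cont_rpow_aff s hs _ (by continuity)).mul continuous_const).intervalIntegrable p q
    _ = (q - p) / (s + 1) * (A + B) := by rw [e1, e2]; ring


theorem hadamard_coordinates_sconvex
    (a b c d s : ℝ) (ha : 0 ≤ a) (hc : 0 ≤ c) (hab : a < b) (hcd : c < d)
    (hs : s ∈ Set.Ioc (0:ℝ) 1) (g : ℝ → ℝ → ℝ)
    (hg0 : ∀ x ∈ Set.Icc a b, ∀ y ∈ Set.Icc c d, 0 ≤ g x y)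
    (hgx : ∀ y ∈ Set.Icc c d, ∀ u ∈ Set.Icc a b, ∀ v ∈ Set.Icc a b,
        ∀ l ∈ Set.Icc (0:ℝ) 1,
      g (l * u + (1 - l) * v) y ≤ l ^ s * g u y + (1 - l) ^ s * g v y)
    (hgy : ∀ x ∈ Set.Icc a b, ∀ u ∈ Set.Icc c d, ∀ v ∈ Set.Icc c d,
        ∀ l ∈ Set.Icc (0:ℝ) 1,
      g x (l * u + (1 - l) * v) ≤ l ^ s * g x u + (1 - l) ^ s * g x v)
    (hint : IntegrableOn (fun p : ℝ × ℝ => g p.1 p.2)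
      (Set.Icc a b ×ˢ Set.Icc c d) volume) :
    (1 / ((b - a) * (d - c))) * ∫ x in a..b, ∫ y in c..d, g x y ≤
      (g a c + g b c + g a d + g b d) / (s + 1) ^ 2 := by
  obtain ⟨hs0, hs1⟩ := hs
  have hba : (0:ℝ) < b - a := by linarith
  have hdc : (0:ℝ) < d - c := by linarith
  have hs1' : (0:ℝ) < s + 1 := by linarith
  -- endpoint nonnegativity
  have haI : a ∈ Icc a b := ⟨le_refl a, hab.le⟩
  have hbI : b ∈ Icc a b := ⟨hab.le, le_refl b⟩
  have hcI : c ∈ Icc c d := ⟨le_refl c, hcd.le⟩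
  have hdI : d ∈ Icc c d := ⟨hcd.le, le_refl d⟩
  have hgac := hg0 a haI c hcI
  have hgbc := hg0 b hbI c hcI
  have hgad := hg0 a haI d hdI
  have hgbd := hg0 b hbI d hdI
  -- the bounding function
  set B : ℝ → ℝ := fun x => (d - c) / (s + 1) *
    (((b - x)/(b - a)) ^ s * (g a c + g a d) + ((x - a)/(b - a)) ^ s * (g b c + g b d)) with hB
  -- integrability of the marginal F
  set F : ℝ → ℝ := fun x => ∫ y in c..d, g x y with hF
  have hFint : IntegrableOn F (Icc a b) volume := by
    have h1 : Integrable (fun p : ℝ × ℝ => g p.1 p.2)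
        ((volume.restrict (Icc a b)).prod (volume.restrict (Icc c d))) := by
      rwa [Measure.prod_restrict, ← Measure.volume_eq_prod]
    have h2 := h1.integral_prod_left
    have h3 : (fun x => ∫ y, g x y ∂(volume.restrict (Icc c d))) = F := by
      funext x
      rw [hF]
      simp only []
      rw [intervalIntegral.integral_of_le hcd.le, ← integral_Icc_eq_integral_Ioc]
    rwa [h3] at h2
  -- pointwise bound F ≤ B on Icc a b
  have hFB : ∀ x ∈ Icc a b, F x ≤ B x := by
    intro x hx
    set l : ℝ := (b - x)/(b - a) with hl
    have hl01 : l ∈ Icc (0:ℝ) 1 := by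
      constructor
      · apply div_nonneg (by linarith [hx.2]) hba.le
      · rw [div_le_one hba]; linarith [hx.1]
    have hlx : l * a + (1 - l) * b = x := by
      rw [hl]; field_simp; try ring
    have h1l : 1 - l = (x - a)/(b - a) := by
      rw [hl]; field_simp; try ring
    by_cases hI : IntervalIntegrable (g x) volume c d
    · -- inner bound
      have step1 : F x ≤ (d - c) / (s + 1) * (g x c + g x d) := by
        apply aux2 s c d (g x c) (g x d) hs0 hcd (g x)
          (hg0 x hx c hcI) (hg0 x hx d hdI) _ hI
        intro y hy
        have hm : (0:ℝ) ≤ (d - y)/(d - c) := div_nonneg (by linarith [hy.2]) hdc.le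
        have hm1 : (d - y)/(d - c) ≤ 1 := by rw [div_le_one hdc]; linarith [hy.1]
        have := hgy x hx c hcI d hdI ((d - y)/(d - c)) ⟨hm, hm1⟩
        have hyeq : (d - y)/(d - c) * c + (1 - (d - y)/(d - c)) * d = y := by
          field_simp; try ring
        rw [hyeq] at this
        have h1m : 1 - (d - y)/(d - c) = (y - c)/(d - c) := by field_simp; try ring
        rw [h1m] at this
        linarith
      -- outer s-convexity at c and d
      have hxc := hgx c hcI a haI b hbI l hl01
      have hxd := hgx d hdI a haI b hbI l hl01
      rw [hlx] at hxc hxd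
      have step2 : g x c + g x d ≤ l ^ s * (g a c + g a d) + (1 - l) ^ s * (g b c + g b d) := by
        linarith
      calc F x ≤ (d - c) / (s + 1) * (g x c + g x d) := step1
        _ ≤ (d - c) / (s + 1) * (l ^ s * (g a c + g a d) + (1 - l) ^ s * (g b c + g b d)) := by
            apply mul_le_mul_of_nonneg_left step2 (by positivity)
        _ = B x := by rw [hB, h1l]
    · have hF0 : F x = 0 := intervalIntegral.integral_undef hI
      rw [hF0, hB]
      have h1 : (0:ℝ) ≤ ((b - x)/(b - a)) ^ s :=
        Real.rpow_nonneg (div_nonneg (by linarith [hx.2]) hba.le) s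
      have h2 : (0:ℝ) ≤ ((x - a)/(b - a)) ^ s :=
        Real.rpow_nonneg (div_nonneg (by linarith [hx.1]) hba.le) s
      have := mul_nonneg h1 (by linarith : (0:ℝ) ≤ g a c + g a d)
      have := mul_nonneg h2 (by linarith : (0:ℝ) ≤ g b c + g b d)
      positivity
  -- integrate the bound
  have hBcont : Continuous B := by
    apply continuous_const.mul
    exact ((cont_rpow_aff s hs0 _ ((continuous_sub_left _).div_const _)).mul continuous_const).add
      ((cont_rpow_aff s hs0 _ ((continuous_sub_right _).div_const _)).mul continuous_const)
  have hFii : IntervalIntegrable F volume a b := by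
    rw [intervalIntegrable_iff_integrableOn_Ioc_of_le hab.le]
    exact hFint.mono_set Ioc_subset_Icc_self
  have hmono : ∫ x in a..b, F x ≤ ∫ x in a..b, B x :=
    intervalIntegral.integral_mono_on hab.le hFii (hBcont.intervalIntegrable a b) hFB
  -- compute ∫ B
  have e1 : ∫ x in a..b, ((x - a)/(b - a)) ^ s = (b - a) / (s + 1) := by
    have := intervalIntegral.integral_comp_sub_right (fun u => (u / (b - a)) ^ s) a
      (a := a) (b := b)
    rw [this, sub_self, aux1 s (b - a) hs0 hba]
  have e2 : ∫ x in a..b, ((b - x)/(b - a)) ^ s = (b - a) / (s + 1) := by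
    have := intervalIntegral.integral_comp_sub_left (fun u => (u / (b - a)) ^ s) b
      (a := a) (b := b)
    rw [this, sub_self, aux1 s (b - a) hs0 hba]
  have hBval : ∫ x in a..b, B x =
      (b - a) * (d - c) / (s + 1) ^ 2 * (g a c + g b c + g a d + g b d) := by
    rw [hB]
    rw [intervalIntegral.integral_const_mul]
    rw [intervalIntegral.integral_add (f := fun x => ((b - x)/(b - a)) ^ s * (g a c + g a d))
      (g := fun x => ((x - a)/(b - a)) ^ s * (g b c + g b d))
      (((cont_rpow_aff s hs0 _ ((continuous_sub_left _).div_const _)).mul continuous_const).intervalIntegrable a b)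
      (((cont_rpow_aff s hs0 _ ((continuous_sub_right _).div_const _)).mul continuous_const).intervalIntegrable a b)]
    rw [intervalIntegral.integral_mul_const, intervalIntegral.integral_mul_const, e1, e2]
    field_simp
    ring
  have hfinal : ∫ x in a..b, F x ≤
      (b - a) * (d - c) / (s + 1) ^ 2 * (g a c + g b c + g a d + g b d) := by
    rw [← hBval]; exact hmono
  have hpos : (0:ℝ) < (b - a) * (d - c) := mul_pos hba hdc
  rw [div_eq_mul_inv, mul_comm]
  rw [one_mul]
  calc (∫ x in a..b, F x) * ((b - a) * (d - c))⁻¹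
      ≤ ((b - a) * (d - c) / (s + 1) ^ 2 * (g a c + g b c + g a d + g b d)) *
        ((b - a) * (d - c))⁻¹ := by
        apply mul_le_mul_of_nonneg_right hfinal (by positivity)
    _ = (g a c + g b c + g a d + g b d) * ((s + 1) ^ 2)⁻¹ := by
        field_simp
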